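/- For every positive integer n, the 5×5 determinant det_{0≤i,j≤4} binom(i+j+n, i-j+n) equals (8/(5!·7!))·(n+1)(n+2)^2(n+3)^2(n+4)(2n+3)(2n+5)^2(2n+7). -/

import Mathlib

/-- `binom a b` for integer `b`: the binomial coefficient, zero when `b < 0` or `b > a`. -/
def binom (a : ℕ) (b : ℤ) : ℕ := if 0 ≤ b then a.choose b.toNat else 0

lemma binom_eq (n i j : ℕ) : binom (i + j + n) ((i : ℤ) - (j : ℤ) + n) = (i + j + n).choose (2 * j) := by
  unfold binom
  split_ifs with h
  · rcases le_or_gt (2 * j) (i + j + n) with h2 | h2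
    · have : ((i : ℤ) - (j : ℤ) + n).toNat = (i + j + n) - 2 * j := by omega
      rw [this, Nat.choose_symm h2]
    · omega
  · push_neg at h
    rw [eq_comm, Nat.choose_eq_zero_of_lt]
    omega

lemma descFac_cast (m r : ℕ) : (Nat.descFactorial m r : ℚ) = ∏ t ∈ Finset.range r, ((m : ℚ) - t) := by
  rcases le_or_gt r m with h | h
  · rw [Nat.descFactorial_eq_prod_range]
    push_cast [Nat.cast_prod]
    refine Finset.prod_congr rfl fun t ht => ?_
    have : t ≤ m := le_trans (Finset.mem_range.mp ht).le h
    push_cast [Nat.cast_sub this]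
    ring
  · rw [Nat.descFactorial_eq_zero_iff_lt.mpr h, Nat.cast_zero, eq_comm,
      Finset.prod_eq_zero (Finset.mem_range.mpr h) (by simp)]

lemma entry_eq (n i j : ℕ) :
    ((binom (i + j + n) ((i : ℤ) - (j : ℤ) + n) : ℕ) : ℚ) =
      (∏ t ∈ Finset.range (2 * j), ((n : ℚ) + i + j - t)) / (Nat.factorial (2 * j)) := by
  rw [binom_eq, Nat.choose_eq_descFactorial_div_factorial,
    Nat.cast_div (Nat.factorial_dvd_descFactorial _ _) (by positivity), descFac_cast]
  congr 1
  refine Finset.prod_congr rfl fun t _ => ?_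
  push_cast; ring

set_option maxRecDepth 10000 in
set_option maxHeartbeats 1000000 in
lemma det_part_aux (x : ℚ) :
    Matrix.det
      !![1, ((x+1)*x)/2, ((x+2)*(x+1)*x*(x-1))/24, ((x+3)*(x+2)*(x+1)*x*(x-1)*(x-2))/720, ((x+4)*(x+3)*(x+2)*(x+1)*x*(x-1)*(x-2)*(x-3))/40320;
         1, ((x+2)*(x+1))/2, ((x+3)*(x+2)*(x+1)*x)/24, ((x+4)*(x+3)*(x+2)*(x+1)*x*(x-1))/720, ((x+5)*(x+4)*(x+3)*(x+2)*(x+1)*x*(x-1)*(x-2))/40320;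
         1, ((x+3)*(x+2))/2, ((x+4)*(x+3)*(x+2)*(x+1))/24, ((x+5)*(x+4)*(x+3)*(x+2)*(x+1)*x)/720, ((x+6)*(x+5)*(x+4)*(x+3)*(x+2)*(x+1)*x*(x-1))/40320;
         1, ((x+4)*(x+3))/2, ((x+5)*(x+4)*(x+3)*(x+2))/24, ((x+6)*(x+5)*(x+4)*(x+3)*(x+2)*(x+1))/720, ((x+7)*(x+6)*(x+5)*(x+4)*(x+3)*(x+2)*(x+1)*x)/40320;
         1, ((x+5)*(x+4))/2, ((x+6)*(x+5)*(x+4)*(x+3))/24, ((x+7)*(x+6)*(x+5)*(x+4)*(x+3)*(x+2))/720, ((x+8)*(x+7)*(x+6)*(x+5)*(x+4)*(x+3)*(x+2)*(x+1))/40320] =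
      (8 / 604800) *
        ((x + 1) * (x + 2) ^ 2 * (x + 3) ^ 2 * (x + 4) *
          (2 * x + 3) * (2 * x + 5) ^ 2 * (2 * x + 7)) := by
  simp [Matrix.det_succ_row_zero, Fin.sum_univ_succ, Fin.succAbove,
    Fin.castSucc, Fin.castAdd, Fin.castLE]
  ring

set_option maxHeartbeats 1000000 in
lemma matrix_eq_aux (n : ℕ) : (Matrix.of (fun i j : Fin 5 =>
      (binom ((i : ℕ) + j + n) ((i : ℤ) - (j : ℤ) + n) : ℚ))) =
      (fun x : ℚ =>
      !![1, ((x+1)*x)/2, ((x+2)*(x+1)*x*(x-1))/24, ((x+3)*(x+2)*(x+1)*x*(x-1)*(x-2))/720, ((x+4)*(x+3)*(x+2)*(x+1)*x*(x-1)*(x-2)*(x-3))/40320;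
         1, ((x+2)*(x+1))/2, ((x+3)*(x+2)*(x+1)*x)/24, ((x+4)*(x+3)*(x+2)*(x+1)*x*(x-1))/720, ((x+5)*(x+4)*(x+3)*(x+2)*(x+1)*x*(x-1)*(x-2))/40320;
         1, ((x+3)*(x+2))/2, ((x+4)*(x+3)*(x+2)*(x+1))/24, ((x+5)*(x+4)*(x+3)*(x+2)*(x+1)*x)/720, ((x+6)*(x+5)*(x+4)*(x+3)*(x+2)*(x+1)*x*(x-1))/40320;
         1, ((x+4)*(x+3))/2, ((x+5)*(x+4)*(x+3)*(x+2))/24, ((x+6)*(x+5)*(x+4)*(x+3)*(x+2)*(x+1))/720, ((x+7)*(x+6)*(x+5)*(x+4)*(x+3)*(x+2)*(x+1)*x)/40320;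
         1, ((x+5)*(x+4))/2, ((x+6)*(x+5)*(x+4)*(x+3))/24, ((x+7)*(x+6)*(x+5)*(x+4)*(x+3)*(x+2))/720, ((x+8)*(x+7)*(x+6)*(x+5)*(x+4)*(x+3)*(x+2)*(x+1))/40320]) (n : ℚ) := by
    ext i j
    rw [Matrix.of_apply, entry_eq n i j]
    fin_cases i <;> fin_cases j <;>
      · simp [Finset.prod_range_succ, Nat.factorial, Matrix.cons_val_zero, Matrix.cons_val_one,
          Matrix.head_cons, Matrix.vecHead, Matrix.vecTail, Matrix.cons_val_succ, Function.comp]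
        try ring
        try simp

theorem binom_det_5 (n : ℕ) (hn : 0 < n) :
    Matrix.det (Matrix.of (fun i j : Fin 5 =>
        (binom ((i : ℕ) + j + n) ((i : ℤ) - (j : ℤ) + n) : ℚ))) =
      (8 / (Nat.factorial 5 * Nat.factorial 7 : ℚ)) *
        ((n + 1) * (n + 2) ^ 2 * (n + 3) ^ 2 * (n + 4) *
          (2 * n + 3) * (2 * n + 5) ^ 2 * (2 * n + 7)) := by
  simp only [matrix_eq_aux n, det_part_aux]
  norm_num [Nat.factorial]
  try ring
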